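/- Let e₀, e₁ be naturals and let x₁, x₂ ∈ F₂^n be vectors such that (x₁, x₂) is (e₀+e₁, e₀+e₁)-close. Then there exists a vector y ∈ F₂^n such that both (x₁, y) and (x₂, y) are (e₀, e₁)-close. -/

import Mathlib

/-- The support of a vector over `F₂`: the set of coordinates equal to `1`. -/
def supp {m : ℕ} (u : Fin m → ZMod 2) : Finset (Fin m) :=
  Finset.univ.filter (fun i => u i = 1)

/-- `(u, w)` is `(e₀,e₁)`-close iff `|supp(w) ∖ supp(u)| ≤ e₀` and
`|supp(u) ∖ supp(w)| ≤ e₁`. -/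
def close {m : ℕ} (e₀ e₁ : ℕ) (u w : Fin m → ZMod 2) : Prop :=
  (supp w \ supp u).card ≤ e₀ ∧ (supp u \ supp w).card ≤ e₁

lemma supp_indicator {m : ℕ} (U : Finset (Fin m)) :
    supp (fun i => if i ∈ U then (1 : ZMod 2) else 0) = U := by
  ext i
  simp only [supp, Finset.mem_filter, Finset.mem_univ, true_and]
  split <;> simp_all

/-- If `(x₁, x₂)` are `(e₀+e₁, e₀+e₁)`-close, then there exists a vector `y` such that
both `(x₁, y)` and `(x₂, y)` are `(e₀, e₁)`-close. -/
theorem asymmetric_balls {n : ℕ} (e₀ e₁ : ℕ) (x₁ x₂ : Fin n → ZMod 2)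
    (h : close (e₀ + e₁) (e₀ + e₁) x₁ x₂) :
    ∃ y : Fin n → ZMod 2, close e₀ e₁ x₁ y ∧ close e₀ e₁ x₂ y := by
  classical
  obtain ⟨h1, h2⟩ := h
  set A := supp x₁ \ supp x₂ with hAdef
  set B := supp x₂ \ supp x₁ with hBdef
  obtain ⟨S, hSA, hScard⟩ := Finset.exists_subset_card_eq (s := A) (n := min A.card e₀) (min_le_left _ _)
  obtain ⟨T, hTB, hTcard⟩ := Finset.exists_subset_card_eq (s := B) (n := min B.card e₀) (min_le_left _ _)
  set U := S ∪ T ∪ (supp x₁ ∩ supp x₂) with hUdef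
  refine ⟨fun i => if i ∈ U then 1 else 0, ?_⟩
  simp only [close]
  rw [show supp (fun i => if i ∈ U then (1:ZMod 2) else 0) = U from supp_indicator U]
  have hS1 : ∀ i, i ∈ S → i ∈ supp x₁ ∧ i ∉ supp x₂ := by
    intro i hi
    have := hSA hi
    rw [hAdef, Finset.mem_sdiff] at this
    exact this
  have hT1 : ∀ i, i ∈ T → i ∈ supp x₂ ∧ i ∉ supp x₁ := by
    intro i hi
    have := hTB hi
    rw [hBdef, Finset.mem_sdiff] at this
    exact this
  have e1 : U \ supp x₁ = T := by
    ext i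
    simp only [hUdef, Finset.mem_sdiff, Finset.mem_union, Finset.mem_inter]
    constructor
    · rintro ⟨(h' | h') | ⟨h', _⟩, hn⟩
      · exact absurd (hS1 i h').1 hn
      · exact h'
      · exact absurd h' hn
    · intro hi
      exact ⟨Or.inl (Or.inr hi), (hT1 i hi).2⟩
  have e2 : supp x₁ \ U = A \ S := by
    ext i
    simp only [hUdef, hAdef, Finset.mem_sdiff, Finset.mem_union, Finset.mem_inter]
    constructor
    · rintro ⟨hi, hn⟩
      push_neg at hn
      exact ⟨⟨hi, fun h' => hn.2 hi h'⟩, hn.1.1⟩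
    · rintro ⟨⟨hi, hn2⟩, hnS⟩
      refine ⟨hi, ?_⟩
      push_neg
      exact ⟨⟨hnS, fun hT => absurd hi (hT1 i hT).2⟩, fun _ => hn2⟩
  have e3 : U \ supp x₂ = S := by
    ext i
    simp only [hUdef, Finset.mem_sdiff, Finset.mem_union, Finset.mem_inter]
    constructor
    · rintro ⟨(h' | h') | ⟨_, h'⟩, hn⟩
      · exact h'
      · exact absurd (hT1 i h').1 hn
      · exact absurd h' hn
    · intro hi
      exact ⟨Or.inl (Or.inl hi), (hS1 i hi).2⟩
  have e4 : supp x₂ \ U = B \ T := by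
    ext i
    simp only [hUdef, hBdef, Finset.mem_sdiff, Finset.mem_union, Finset.mem_inter]
    constructor
    · rintro ⟨hi, hn⟩
      push_neg at hn
      exact ⟨⟨hi, fun h' => hn.2 h' hi⟩, hn.1.2⟩
    · rintro ⟨⟨hi, hn1⟩, hnT⟩
      refine ⟨hi, ?_⟩
      push_neg
      exact ⟨⟨fun hS => absurd hi (hS1 i hS).2, hnT⟩, fun h' => absurd h' hn1⟩
  have cA : (A \ S).card = A.card - S.card := Finset.card_sdiff_of_subset hSA
  have cB : (B \ T).card = B.card - T.card := Finset.card_sdiff_of_subset hTB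
  constructor
  · constructor
    · rw [e1, hTcard]; omega
    · rw [e2, cA]; omega
  · constructor
    · rw [e3, hScard]; omega
    · rw [e4, cB]; omega
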